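/- The extinction probability map $P \mapsto \pi_e(P)$, defined on probability measures on the non-negative integers as the smallest fixed point in $[0,1]$ of the generating function $\varphi_P(x) = \sum_{k \geq 0} P(k) x^k$, is continuous with respect to weak convergence at every $P \neq \delta_1$: if $P_n \to P$ weakly and $P \neq \delta_1$, then $\pi_e(P_n) \to \pi_e(P)$. -/

import Mathlib

open MeasureTheory Filter Topology

/-- The probability generating function of a distribution on `ℕ`. -/
noncomputable def genFun (P : PMF ℕ) (x : ℝ) : ℝ := ∑' k, (P k).toReal * x ^ k

/-- The extinction probability: the smallest fixed point of the generating function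
in `[0,1]`. -/
noncomputable def extinction (P : PMF ℕ) : ℝ :=
  sInf {x : ℝ | x ∈ Set.Icc (0 : ℝ) 1 ∧ genFun P x = x}

lemma pmf_toReal_le_one (P : PMF ℕ) (k : ℕ) : (P k).toReal ≤ 1 :=
  ENNReal.toReal_le_of_le_ofReal one_pos.le (by simpa using P.coe_le_one k)

lemma pmf_toReal_nonneg (P : PMF ℕ) (k : ℕ) : 0 ≤ (P k).toReal := ENNReal.toReal_nonneg

lemma pmf_summable (P : PMF ℕ) : Summable (fun k => (P k).toReal) :=
  ENNReal.summable_toReal (by simp [P.tsum_coe])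

lemma pmf_tsum (P : PMF ℕ) : ∑' k, (P k).toReal = 1 := by
  rw [← ENNReal.tsum_toReal_eq (fun k => (P.coe_le_one k).trans_lt ENNReal.one_lt_top |>.ne)]
  simp [P.tsum_coe]

lemma summable_term (P : PMF ℕ) {x : ℝ} (h0 : 0 ≤ x) (h1 : x ≤ 1) :
    Summable (fun k => (P k).toReal * x ^ k) := by
  apply (pmf_summable P).of_nonneg_of_le
    (fun k => mul_nonneg (pmf_toReal_nonneg P k) (pow_nonneg h0 k))
  intro k
  calc (P k).toReal * x ^ k ≤ (P k).toReal * 1 := by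
        exact mul_le_mul_of_nonneg_left (pow_le_one₀ h0 h1) (pmf_toReal_nonneg P k)
    _ = (P k).toReal := mul_one _

lemma genFun_one (P : PMF ℕ) : genFun P 1 = 1 := by
  simp [genFun, pmf_tsum P]

lemma genFun_nonneg (P : PMF ℕ) {x : ℝ} (h0 : 0 ≤ x) : 0 ≤ genFun P x :=
  tsum_nonneg fun k => mul_nonneg (pmf_toReal_nonneg P k) (pow_nonneg h0 k)

lemma genFun_continuousOn (P : PMF ℕ) : ContinuousOn (genFun P) (Set.Icc (0:ℝ) 1) := by
  rw [continuousOn_iff_continuous_restrict]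
  have : (Set.Icc (0:ℝ) 1).domRestrict (genFun P)
      = fun x : Set.Icc (0:ℝ) 1 => ∑' k, (P k).toReal * (x:ℝ) ^ k := rfl
  rw [this]
  apply continuous_tsum (u := fun k => (P k).toReal)
  · exact fun k => Continuous.mul continuous_const ((continuous_subtype_val).pow k)
  · exact pmf_summable P
  · intro k x
    rw [Real.norm_eq_abs, abs_mul, abs_of_nonneg (pmf_toReal_nonneg P k), abs_pow]
    calc (P k).toReal * |(x:ℝ)| ^ k ≤ (P k).toReal * 1 := by
          apply mul_le_mul_of_nonneg_left _ (pmf_toReal_nonneg P k)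
          exact pow_le_one₀ (abs_nonneg _) (abs_le.2 ⟨by linarith [x.2.1], x.2.2⟩)
      _ = _ := mul_one _

/-- chord inequality (convexity). -/
lemma genFun_convex (P : PMF ℕ) {x y a b : ℝ} (hx0 : 0 ≤ x) (hx1 : x ≤ 1)
    (hy0 : 0 ≤ y) (hy1 : y ≤ 1) (ha : 0 ≤ a) (hb : 0 ≤ b) (hab : a + b = 1) :
    genFun P (a * x + b * y) ≤ a * genFun P x + b * genFun P y := by
  have hz0 : 0 ≤ a * x + b * y := by positivity
  have hz1 : a * x + b * y ≤ 1 := by nlinarith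
  have hterm : ∀ k, (P k).toReal * (a * x + b * y) ^ k
      ≤ a * ((P k).toReal * x ^ k) + b * ((P k).toReal * y ^ k) := by
    intro k
    have hc := (convexOn_pow k).2 (Set.mem_Ici.2 hx0) (Set.mem_Ici.2 hy0) ha hb hab
    simp only [smul_eq_mul] at hc
    nlinarith [pmf_toReal_nonneg P k, pmf_toReal_nonneg P k]
  calc genFun P (a * x + b * y) ≤ ∑' k, (a * ((P k).toReal * x ^ k) + b * ((P k).toReal * y ^ k)) := by
        apply Summable.tsum_le_tsum hterm (summable_term P hz0 hz1)
        exact ((summable_term P hx0 hx1).mul_left a).add ((summable_term P hy0 hy1).mul_left b)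
    _ = a * genFun P x + b * genFun P y := by
        rw [Summable.tsum_add ((summable_term P hx0 hx1).mul_left a) ((summable_term P hy0 hy1).mul_left b),
          tsum_mul_left, tsum_mul_left]
        rfl


lemma fixSet_compact (P : PMF ℕ) :
    IsCompact {x : ℝ | x ∈ Set.Icc (0:ℝ) 1 ∧ genFun P x = x} := by
  have h : {x : ℝ | x ∈ Set.Icc (0:ℝ) 1 ∧ genFun P x = x}
      = Subtype.val '' {z : Set.Icc (0:ℝ) 1 | (Set.Icc (0:ℝ) 1).restrict (genFun P) z = z.val} := by
    ext x
    constructor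
    · rintro ⟨hx, hfx⟩; exact ⟨⟨x, hx⟩, hfx, rfl⟩
    · rintro ⟨⟨z, hz⟩, hfz, rfl⟩; exact ⟨hz, hfz⟩
  rw [h]
  apply IsCompact.image _ continuous_subtype_val
  have : CompactSpace (Set.Icc (0:ℝ) 1) := isCompact_iff_compactSpace.1 isCompact_Icc
  apply IsClosed.isCompact
  exact isClosed_eq ((continuousOn_iff_continuous_restrict.1 (genFun_continuousOn P)))
    continuous_subtype_val

lemma one_mem_fixSet (P : PMF ℕ) :
    (1:ℝ) ∈ {x : ℝ | x ∈ Set.Icc (0:ℝ) 1 ∧ genFun P x = x} :=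
  ⟨⟨zero_le_one, le_refl 1⟩, genFun_one P⟩

lemma extinction_mem (P : PMF ℕ) :
    extinction P ∈ {x : ℝ | x ∈ Set.Icc (0:ℝ) 1 ∧ genFun P x = x} :=
  (fixSet_compact P).sInf_mem ⟨1, one_mem_fixSet P⟩

lemma extinction_nonneg (P : PMF ℕ) : 0 ≤ extinction P := (extinction_mem P).1.1

lemma extinction_le_one (P : PMF ℕ) : extinction P ≤ 1 := (extinction_mem P).1.2

lemma extinction_fix (P : PMF ℕ) : genFun P (extinction P) = extinction P := (extinction_mem P).2

lemma extinction_le {P : PMF ℕ} {y : ℝ} (hy : y ∈ Set.Icc (0:ℝ) 1) (hfy : genFun P y = y) :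
    extinction P ≤ y :=
  csInf_le (fixSet_compact P).bddBelow ⟨hy, hfy⟩

/-- If `φ x < x`, then extinction ≤ x (IVT). -/
lemma extinction_le_of_lt (P : PMF ℕ) {x : ℝ} (hx0 : 0 ≤ x) (hx1 : x ≤ 1)
    (h : genFun P x < x) : extinction P ≤ x := by
  have hcont : ContinuousOn (fun y => genFun P y - y) (Set.Icc 0 x) :=
    ((genFun_continuousOn P).mono (Set.Icc_subset_Icc le_rfl hx1)).sub continuousOn_id
  have h0 : (0:ℝ) ∈ Set.Icc (genFun P x - x) (genFun P 0 - 0) := by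
    constructor
    · linarith
    · simpa using genFun_nonneg P le_rfl
  obtain ⟨y, hy, hfy⟩ := intermediate_value_Icc' hx0 hcont h0
  have : genFun P y = y := by dsimp at hfy; linarith
  exact (extinction_le ⟨hy.1, hy.2.trans hx1⟩ this).trans hy.2

/-- chord: if p is a fixed point and p ≤ y ≤ 1 then φ y ≤ y. -/
lemma genFun_le_of_fix {P : PMF ℕ} {p y : ℝ} (hp0 : 0 ≤ p) (hfp : genFun P p = p)
    (hpy : p ≤ y) (hy1 : y ≤ 1) : genFun P y ≤ y := by
  rcases eq_or_lt_of_le (hpy.trans hy1) with hp1 | hp1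
  · have : y = 1 := le_antisymm hy1 (hp1 ▸ hpy)
    rw [this, genFun_one]
  · set t := (y - p) / (1 - p) with ht
    have h1p : 0 < 1 - p := by linarith
    have ht0 : 0 ≤ t := div_nonneg (by linarith) h1p.le
    have ht1 : t ≤ 1 := by rw [div_le_one h1p]; linarith
    have hy : (1 - t) * p + t * 1 = y := by rw [ht]; field_simp; ring
    have := genFun_convex P hp0 (hp1.le) zero_le_one le_rfl (by linarith : (0:ℝ) ≤ 1 - t) ht0
      (by ring)
    rw [hy, hfp, genFun_one] at this
    linarith

/-- if φ y > y with y ∈ [0,1], then extinction > y. -/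
lemma lt_extinction_of_gt (P : PMF ℕ) {y : ℝ} (hy0 : 0 ≤ y) (hy1 : y ≤ 1)
    (h : y < genFun P y) : y < extinction P := by
  by_contra hc
  push_neg at hc
  have := genFun_le_of_fix (extinction_nonneg P) (extinction_fix P) hc hy1
  linarith

/-- key identity: if φ t = t for t ∈ [0,1), then ∑ P k * (∑_{i<k} t^i) = 1. -/
lemma sigma_sum_eq_one (P : PMF ℕ) {t : ℝ} (ht0 : 0 ≤ t) (ht1 : t < 1)
    (hft : genFun P t = t) :
    ∑' k, (P k).toReal * (∑ i ∈ Finset.range k, t ^ i) = 1 := by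
  have h1t : (0:ℝ) < 1 - t := by linarith
  have hσ : ∀ k, (1 - t) * ((P k).toReal * (∑ i ∈ Finset.range k, t ^ i))
      = (P k).toReal - (P k).toReal * t ^ k := by
    intro k
    have h2 : (1 - t) * (∑ i ∈ Finset.range k, t ^ i) = 1 - t ^ k := by
      have := geom_sum_mul t k; linarith
    calc (1 - t) * ((P k).toReal * (∑ i ∈ Finset.range k, t ^ i))
        = (P k).toReal * ((1 - t) * (∑ i ∈ Finset.range k, t ^ i)) := by ring
      _ = (P k).toReal * (1 - t ^ k) := by rw [h2]
      _ = (P k).toReal - (P k).toReal * t ^ k := by ring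
  have hsum2 : Summable (fun k => (P k).toReal - (P k).toReal * t ^ k) :=
    (pmf_summable P).sub (summable_term P ht0 ht1.le)
  have hsummable : Summable (fun k => (P k).toReal * (∑ i ∈ Finset.range k, t ^ i)) := by
    have := hsum2.mul_left (1 - t)⁻¹
    apply this.congr
    intro k
    rw [← hσ k]
    field_simp
  have key : (1 - t) * ∑' k, (P k).toReal * (∑ i ∈ Finset.range k, t ^ i) = 1 - t := by
    rw [← tsum_mul_left]
    calc ∑' k, (1 - t) * ((P k).toReal * (∑ i ∈ Finset.range k, t ^ i))
        = ∑' k, ((P k).toReal - (P k).toReal * t ^ k) := by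
          exact tsum_congr hσ
      _ = (∑' k, (P k).toReal) - ∑' k, (P k).toReal * t ^ k :=
          Summable.tsum_sub (pmf_summable P) (summable_term P ht0 ht1.le)
      _ = 1 - t := by rw [pmf_tsum P]; rw [show (∑' k, (P k).toReal * t ^ k) = genFun P t from rfl, hft]
  have := mul_left_cancel₀ h1t.ne' (key.trans (mul_one (1-t)).symm)
  linarith [this]

/-- Two distinct fixed points in [0,1) force P = δ₁. -/
lemma eq_pure_of_two_fix (P : PMF ℕ) {t₁ t₂ : ℝ} (h0 : 0 ≤ t₁) (h12 : t₁ < t₂) (h21 : t₂ < 1)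
    (hf1 : genFun P t₁ = t₁) (hf2 : genFun P t₂ = t₂) : P = PMF.pure 1 := by
  have hs1 := sigma_sum_eq_one P h0 (h12.trans h21) hf1
  have hs2 := sigma_sum_eq_one P (h0.trans h12.le) h21 hf2
  -- all mass at k ≤ 1
  have hzero : ∀ k, 2 ≤ k → (P k).toReal = 0 := by
    intro k hk
    by_contra hne0
    have hpos : 0 < (P k).toReal := lt_of_le_of_ne (pmf_toReal_nonneg P k) (Ne.symm hne0)
    have hle : ∀ j, (P j).toReal * (∑ i ∈ Finset.range j, t₁ ^ i)
        ≤ (P j).toReal * (∑ i ∈ Finset.range j, t₂ ^ i) := by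
      intro j
      apply mul_le_mul_of_nonneg_left _ (pmf_toReal_nonneg P j)
      exact Finset.sum_le_sum fun i _ => pow_le_pow_left₀ h0 h12.le i
    have hstrict : (P k).toReal * (∑ i ∈ Finset.range k, t₁ ^ i)
        < (P k).toReal * (∑ i ∈ Finset.range k, t₂ ^ i) := by
      apply mul_lt_mul_of_pos_left _ hpos
      apply Finset.sum_lt_sum
      · exact fun i _ => pow_le_pow_left₀ h0 h12.le i
      · refine ⟨1, Finset.mem_range.2 (by omega), by simpa using h12⟩
    have hsum2' : Summable (fun j => (P j).toReal * (∑ i ∈ Finset.range j, t₂ ^ i)) := by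
      have h1t : (0:ℝ) < 1 - t₂ := by linarith
      apply (pmf_summable P).mul_left (1 - t₂)⁻¹ |>.of_nonneg_of_le
      · intro j
        exact mul_nonneg (pmf_toReal_nonneg P j)
          (Finset.sum_nonneg fun i _ => pow_nonneg (h0.trans h12.le) i)
      · intro j
        have hσ : (∑ i ∈ Finset.range j, t₂ ^ i) ≤ (1 - t₂)⁻¹ := by
          have h2 : (1 - t₂) * (∑ i ∈ Finset.range j, t₂ ^ i) = 1 - t₂ ^ j := by
            have := geom_sum_mul t₂ j; linarith
          rw [inv_eq_one_div, le_div_iff₀ h1t]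
          nlinarith [pow_nonneg (h0.trans h12.le) j]
        calc (P j).toReal * (∑ i ∈ Finset.range j, t₂ ^ i)
            ≤ (P j).toReal * (1 - t₂)⁻¹ :=
              mul_le_mul_of_nonneg_left hσ (pmf_toReal_nonneg P j)
          _ = (1 - t₂)⁻¹ * (P j).toReal := mul_comm _ _
    have := Summable.tsum_lt_tsum_of_nonneg
      (fun j => mul_nonneg (pmf_toReal_nonneg P j)
        (Finset.sum_nonneg fun i _ => pow_nonneg h0 i)) hle hstrict hsum2'
    rw [hs1, hs2] at this
    exact lt_irrefl 1 this
  -- now genFun is affine: P0 + P1 * t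
  have ht1lt : t₁ < 1 := h12.trans h21
  have hgen : (P 0).toReal + (P 1).toReal * t₁ = t₁ := by
    have : genFun P t₁ = ∑ k ∈ ({0, 1} : Finset ℕ), (P k).toReal * t₁ ^ k := by
      apply tsum_eq_sum
      intro b hb
      have hb2 : 2 ≤ b := by
        simp only [Finset.mem_insert, Finset.mem_singleton] at hb
        omega
      rw [hzero b hb2, zero_mul]
    rw [hf1] at this
    simp at this
    linarith
  have hsum : (P 0).toReal + (P 1).toReal = 1 := by
    have : (∑' k, (P k).toReal) = ∑ k ∈ ({0, 1} : Finset ℕ), (P k).toReal := by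
      apply tsum_eq_sum
      intro b hb
      have hb2 : 2 ≤ b := by
        simp only [Finset.mem_insert, Finset.mem_singleton] at hb
        omega
      exact hzero b hb2
    rw [pmf_tsum P] at this
    simp at this
    linarith
  have hP1 : (P 1).toReal = 1 := by
    have h1 : (P 1).toReal * (1 - t₁) = 1 - t₁ := by nlinarith
    have := mul_right_cancel₀ (by linarith : (1:ℝ) - t₁ ≠ 0) (h1.trans (one_mul (1 - t₁)).symm)
    exact this
  have hP1' : P 1 = 1 := by
    have hne : P 1 ≠ ⊤ := ((P.coe_le_one 1).trans_lt ENNReal.one_lt_top).ne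
    rw [← ENNReal.toReal_eq_one_iff] at *
    exact hP1
  have hsupp := (PMF.apply_eq_one_iff P 1).1 hP1'
  ext k
  rw [PMF.pure_apply]
  by_cases hk : k = 1
  · simp [hk, hP1']
  · simp only [hk, if_false]
    rw [PMF.apply_eq_zero_iff]
    rw [hsupp]
    simpa using hk

/-- Strict inequality above extinction, when P ≠ δ₁. -/
lemma genFun_lt_of_gt_extinction (P : PMF ℕ) (hne : P ≠ PMF.pure 1) {x : ℝ}
    (hx : extinction P < x) (hx1 : x < 1) : genFun P x < x := by
  set p := extinction P with hp
  have hp0 := extinction_nonneg P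
  have hfp := extinction_fix P
  have hle : genFun P x ≤ x := genFun_le_of_fix hp0 hfp hx.le hx1.le
  rcases lt_or_eq_of_le hle with h | heq
  · exact h
  exfalso
  apply hne
  set t₂ := (x + 1) / 2 with ht2
  have hxt2 : x < t₂ := by rw [ht2]; linarith
  have ht21 : t₂ < 1 := by rw [ht2]; linarith
  -- φ(t₂) ≤ t₂ from chord with fixed point x
  have hub : genFun P t₂ ≤ t₂ := genFun_le_of_fix (hp0.trans hx.le) heq hxt2.le ht21.le
  -- φ(t₂) ≥ t₂ from convexity with π < x < t₂
  have hlb : t₂ ≤ genFun P t₂ := by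
    set s := (x - p) / (t₂ - p) with hs
    have hd : 0 < t₂ - p := by linarith
    have hs0 : 0 < s := div_pos (by linarith) hd
    have hs1 : s ≤ 1 := by rw [div_le_one hd]; linarith
    have hxs : (1 - s) * p + s * t₂ = x := by rw [hs]; field_simp; ring
    have hc := genFun_convex P hp0 (hx.le.trans hx1.le) (by linarith : (0:ℝ) ≤ t₂)
      ht21.le (by linarith : (0:ℝ) ≤ 1 - s) hs0.le (by ring)
    rw [hxs, hfp, heq] at hc
    -- x ≤ (1-s) p + s φ(t₂), and x = (1-s) p + s t₂
    nlinarith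
  exact eq_pure_of_two_fix P (hp0.trans hx.le) hxt2 ht21 heq (le_antisymm hub hlb)

lemma genFun_tendsto (P : ℕ → PMF ℕ) (Plim : PMF ℕ)
    (hweak : ∀ k, Tendsto (fun n => ((P n) k).toReal) atTop (𝓝 ((Plim k).toReal)))
    {x : ℝ} (hx0 : 0 ≤ x) (hx1 : x < 1) :
    Tendsto (fun n => genFun (P n) x) atTop (𝓝 (genFun Plim x)) := by
  apply tendsto_tsum_of_dominated_convergence (bound := fun k => x ^ k)
    (summable_geometric_of_lt_one hx0 hx1)
  · intro k
    exact (hweak k).mul_const _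
  · filter_upwards with n k
    rw [Real.norm_eq_abs, abs_mul, abs_of_nonneg (pmf_toReal_nonneg _ k),
      abs_of_nonneg (pow_nonneg hx0 k)]
    calc ((P n) k).toReal * x ^ k ≤ 1 * x ^ k :=
          mul_le_mul_of_nonneg_right (pmf_toReal_le_one _ k) (pow_nonneg hx0 k)
      _ = x ^ k := one_mul _

/-- Continuity of the extinction probability with respect to weak convergence at
every `P ≠ δ₁`. -/
theorem extinction_continuous (P : ℕ → PMF ℕ) (Plim : PMF ℕ)
    (hweak : ∀ k, Tendsto (fun n => ((P n) k).toReal) atTop (𝓝 ((Plim k).toReal)))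
    (hne : Plim ≠ PMF.pure 1) :
    Tendsto (fun n => extinction (P n)) atTop (𝓝 (extinction Plim)) := by
  rw [Metric.tendsto_nhds]
  intro ε hε
  have hq0 := extinction_nonneg Plim
  have hq1 := extinction_le_one Plim
  have hupper : ∀ᶠ n in atTop, extinction (P n) < extinction Plim + ε := by
    by_cases hcase : extinction Plim + ε / 2 < 1
    · have hqx : extinction Plim < extinction Plim + ε / 2 := by linarith
      have hlt : genFun Plim (extinction Plim + ε / 2) < extinction Plim + ε / 2 :=
        genFun_lt_of_gt_extinction Plim hne hqx hcase
      have hev := (genFun_tendsto P Plim hweak (by linarith) hcase).eventually_lt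
        tendsto_const_nhds hlt
      filter_upwards [hev] with n hn
      have := extinction_le_of_lt (P n) (by linarith) hcase.le hn
      linarith
    · push_neg at hcase
      filter_upwards with n
      have := extinction_le_one (P n)
      linarith
  have hlower : ∀ᶠ n in atTop, extinction Plim - ε < extinction (P n) := by
    by_cases hcase : 0 ≤ extinction Plim - ε / 2
    · have hy0 : (0:ℝ) ≤ extinction Plim - ε / 2 := hcase
      have hyq : extinction Plim - ε / 2 < extinction Plim := by linarith
      have hy1 : extinction Plim - ε / 2 < 1 := lt_of_lt_of_le hyq hq1
      have hne' : genFun Plim (extinction Plim - ε / 2) ≠ extinction Plim - ε / 2 := by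
        intro h
        exact absurd (extinction_le ⟨hy0, hy1.le⟩ h) (not_le.2 hyq)
      have hgt : extinction Plim - ε / 2 < genFun Plim (extinction Plim - ε / 2) := by
        rcases lt_or_gt_of_ne hne' with h | h
        · exfalso
          have := extinction_le_of_lt Plim hy0 hy1.le h
          linarith
        · exact h
      have hev := (tendsto_const_nhds (x := extinction Plim - ε / 2)).eventually_lt
        (genFun_tendsto P Plim hweak hy0 hy1) hgt
      filter_upwards [hev] with n hn
      have := lt_extinction_of_gt (P n) hy0 hy1.le hn
      linarith
    · push_neg at hcase
      filter_upwards with n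
      have := extinction_nonneg (P n)
      linarith
  filter_upwards [hupper, hlower] with n h1 h2
  rw [Real.dist_eq, abs_lt]
  constructor <;> linarith
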